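/- With the notation below, suppose (Γ, s) is bipartite with bipartite ordering, with parts of sizes k₁ and k₂ = n − k₁, let D be the diagonal matrix whose first k₁ diagonal entries are 1 and whose last k₂ diagonal entries are −1, and let s̄(i) = −s(i). Then the Coxeter elements for the two sign labelings are conjugate: ω_{Γ,s} = D · ω_{Γ,s̄} · D. In particular, ω_{Γ,s} and ω_{Γ,s̄} have the same characteristic polynomial, and hence the same spectral radius: |ω_{Γ,s}| = |ω_{Γ,s̄}|. -/

import Mathlib

open Matrix

noncomputable section

/-- The Coxeter generator `s_i^{(t)}` for the sign labeling `t`: it agrees with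
the identity except in row `i`, where `(s_i^{(t)})_{ii} = −1` and
`(s_i^{(t)})_{ij} = t(i)·a_{ij}` for `j ≠ i`. -/
def coxGen (n : ℕ) (A : Matrix (Fin n) (Fin n) ℝ) (t : Fin n → ℝ) (i : Fin n) :
    Matrix (Fin n) (Fin n) ℝ :=
  fun j k =>
    if j = i then (if k = i then -1 else t i * A i k)
    else (if j = k then 1 else 0)

/-- The Coxeter element `ω_{Γ,t} = s_1^{(t)} ⋯ s_n^{(t)}`. -/
def coxElt (n : ℕ) (A : Matrix (Fin n) (Fin n) ℝ) (t : Fin n → ℝ) :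
    Matrix (Fin n) (Fin n) ℝ :=
  ((List.finRange n).map (coxGen n A t)).prod

/-- The spectral radius of a real square matrix: the maximum of `|z|` over the
complex roots `z` of its characteristic polynomial. -/
def specRad (n : ℕ) (M : Matrix (Fin n) (Fin n) ℝ) : ℝ :=
  sSup ((fun z : ℂ => ‖z‖) '' {z : ℂ | (M.charpoly.map (algebraMap ℝ ℂ)).IsRoot z})

lemma conj_list_prod {n : ℕ} (D : Matrix (Fin n) (Fin n) ℝ) (hDD : D * D = 1)
    (l : List (Matrix (Fin n) (Fin n) ℝ)) :
    D * l.prod * D = (l.map (fun M => D * M * D)).prod := by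
  induction l with
  | nil => simpa using hDD
  | cons a l ih =>
      simp only [List.prod_cons, List.map_cons]
      rw [← ih]
      simp only [mul_assoc]
      rw [← mul_assoc D D (l.prod * D), hDD, one_mul]

lemma conj_charpoly {n : ℕ} (D M : Matrix (Fin n) (Fin n) ℝ) (hDD : D * D = 1) :
    (D * M * D).charpoly = M.charpoly := by
  let D' := D.map (Polynomial.C : ℝ →+* Polynomial ℝ)
  have hD'D' : D' * D' = 1 := by
    simp only [D', ← Matrix.map_mul, hDD]
    ext i j
    simp [Matrix.one_apply, apply_ite]
  have hchar : charmatrix (D * M * D) = D' * charmatrix M * D' := by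
    unfold charmatrix
    rw [mul_sub, sub_mul]
    congr 1
    · have : D' * (Matrix.scalar (Fin n)) Polynomial.X = (Matrix.scalar (Fin n)) Polynomial.X * D' :=
        (Matrix.scalar_commute Polynomial.X (fun r => Commute.all _ _) D').symm
      rw [mul_assoc, ← this, ← mul_assoc, hD'D', one_mul]
    · simp [D', Matrix.map_mul]
  rw [Matrix.charpoly, Matrix.charpoly, hchar, Matrix.det_mul, Matrix.det_mul]
  have h1 : D'.det * D'.det = 1 := by rw [← Matrix.det_mul, hD'D', Matrix.det_one]
  calc D'.det * (charmatrix M).det * D'.det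
      = D'.det * D'.det * (charmatrix M).det := by ring
    _ = (charmatrix M).det := by rw [h1, one_mul]

theorem stmt_10 (n : ℕ) (hn : 1 ≤ n) (A : Matrix (Fin n) (Fin n) ℝ)
    (hsym : ∀ i j, A i j = A j i) (hdiag : ∀ i, A i i = 0)
    (h01 : ∀ i j, A i j = 0 ∨ A i j = 1)
    (s : Fin n → ℝ) (hs : ∀ i, s i = 1 ∨ s i = -1)
    (k₁ : ℕ) (hk₁ : 1 ≤ k₁) (hk₁n : k₁ < n)
    (hbip : ∀ i j : Fin n, ((i : ℕ) < k₁ ↔ (j : ℕ) < k₁) → A i j = 0)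
    (D : Matrix (Fin n) (Fin n) ℝ)
    (hD : D = Matrix.diagonal (fun i : Fin n => if (i : ℕ) < k₁ then 1 else -1)) :
    coxElt n A s = D * coxElt n A (fun i => -(s i)) * D ∧
    (coxElt n A s).charpoly = (coxElt n A (fun i => -(s i))).charpoly ∧
    specRad n (coxElt n A s) = specRad n (coxElt n A (fun i => -(s i))) := by
  set d : Fin n → ℝ := fun i => if (i : ℕ) < k₁ then 1 else -1 with hd
  have hDD : D * D = 1 := by
    rw [hD, Matrix.diagonal_mul_diagonal]
    ext i j
    by_cases h : (i : ℕ) < k₁ <;> simp [Matrix.diagonal, Matrix.one_apply, d, h]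
  have hgen : ∀ i, D * coxGen n A (fun j => -(s j)) i * D = coxGen n A s i := by
    intro i
    ext j k
    rw [hD]
    rw [Matrix.mul_apply]
    have : ∀ x, (Matrix.diagonal d * coxGen n A (fun j => -(s j)) i) j x
        = d j * coxGen n A (fun j => -(s j)) i j x := fun x => Matrix.diagonal_mul _ _ _ _
    simp only [this, Matrix.diagonal_apply, mul_ite, mul_zero]
    rw [Finset.sum_eq_single k (by intro b _ hb; simp [hb]) (by simp)]
    simp only [if_pos rfl]
    simp only [coxGen]
    by_cases hj : j = i
    · by_cases hk : k = i
      · simp only [hj, hk, if_pos rfl]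
        by_cases h : (i : ℕ) < k₁ <;> simp [d, h]
      · simp only [hj, if_pos rfl, if_neg hk]
        by_cases hA : A i k = 0
        · simp [hA]
        · have hne : ¬ ((i : ℕ) < k₁ ↔ (k : ℕ) < k₁) := fun h => hA (hbip i k h)
          by_cases h1 : (i : ℕ) < k₁
          · have h2 : ¬ (k : ℕ) < k₁ := fun h2 => hne ⟨fun _ => h2, fun _ => h1⟩
            simp only [d, if_pos h1, if_neg h2, if_true]; ring_nf
          · have h2 : (k : ℕ) < k₁ := by
              by_contra h2
              exact hne ⟨fun h => absurd h h1, fun h => absurd h h2⟩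
            simp only [d, if_neg h1, if_pos h2, if_true]; ring_nf
    · simp only [if_neg hj]
      by_cases hk : j = k
      · simp only [hk, if_pos rfl]
        by_cases h : (k : ℕ) < k₁ <;> simp [d, h]
      · simp [hk]
  have key : coxElt n A s = D * coxElt n A (fun i => -(s i)) * D := by
    unfold coxElt
    rw [conj_list_prod D hDD, List.map_map]
    congr 1
    exact List.map_congr_left (fun i _ => (hgen i).symm)
  refine ⟨key, ?_, ?_⟩
  · rw [key, conj_charpoly _ _ hDD]
  · unfold specRad
    rw [key, conj_charpoly _ _ hDD]

end
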